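/- Two subgroups of a finite group in which all Sylow subgroups are cyclic are conjugate if and only if they have the same order. -/

import Mathlib

open Subgroup

universe u

namespace ZMhelp

variable {G : Type u} [Group G]





lemma conj_one (H : Subgroup G) :
    Subgroup.map (MulAut.conj (1 : G)).toMonoidHom H = H := by
  ext x; simp

lemma conj_conj (a b : G) (H : Subgroup G) :
    Subgroup.map (MulAut.conj a).toMonoidHom (Subgroup.map (MulAut.conj b).toMonoidHom H)
      = Subgroup.map (MulAut.conj (a * b)).toMonoidHom H := by
  rw [Subgroup.map_map]
  congr 1
  ext x
  simp [mul_assoc]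

lemma conj_injective (g : G) : Function.Injective (MulAut.conj g).toMonoidHom :=
  (MulAut.conj g).injective

lemma card_conj (g : G) (H : Subgroup G) :
    Nat.card (Subgroup.map (MulAut.conj g).toMonoidHom H) = Nat.card H :=
  Nat.card_congr (H.equivMapOfInjective _ (conj_injective g)).toEquiv.symm

lemma conj_normal (N : Subgroup G) [N.Normal] (g : G) :
    Subgroup.map (MulAut.conj g).toMonoidHom N = N := by
  ext x
  simp only [Subgroup.mem_map, MulEquiv.coe_toMonoidHom, MulAut.conj_apply]
  constructor
  · rintro ⟨y, hy, rfl⟩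
    exact Subgroup.Normal.conj_mem ‹N.Normal› y hy g
  · intro hx
    exact ⟨g⁻¹ * x * g, by simpa using Subgroup.Normal.conj_mem ‹N.Normal› x hx g⁻¹,
      by group⟩

lemma card_subgroupOf {H M : Subgroup G} (h : H ≤ M) :
    Nat.card (H.subgroupOf M) = Nat.card H :=
  Nat.card_congr (Subgroup.subgroupOfEquivOfLe h).toEquiv

lemma conj_of_subgroupOf {M H K : Subgroup G} (hH : H ≤ M) (hK : K ≤ M) (g : M)
    (h : Subgroup.map (MulAut.conj g).toMonoidHom (H.subgroupOf M) = K.subgroupOf M) :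
    Subgroup.map (MulAut.conj (g : G)).toMonoidHom H = K := by
  have h2 := congrArg (Subgroup.map M.subtype) h
  rw [Subgroup.map_map, subgroupOf_map_subtype, inf_of_le_left hK] at h2
  have h3 : Subgroup.map M.subtype (H.subgroupOf M) = H := by
    rw [subgroupOf_map_subtype, inf_of_le_left hH]
  rw [← h2, ← h3, Subgroup.map_map]
  congr 1
  ext x
  simp






lemma nat_cancel_aux {p a b k l : ℕ} (hp : p.Prime) (hkl : k ≤ l)
    (h : a * p ^ k = b * p ^ l) (ha : ¬ p ∣ a) : a = b := by
  obtain ⟨d, rfl⟩ := Nat.exists_eq_add_of_le hkl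
  rw [pow_add, ← mul_assoc, mul_right_comm] at h
  have hk : 0 < p ^ k := pow_pos hp.pos k
  have h2 : a = b * p ^ d := Nat.eq_of_mul_eq_mul_right hk h
  rcases Nat.eq_zero_or_pos d with hd | hd
  · simpa [hd] using h2
  · exfalso
    exact ha (h2 ▸ Dvd.dvd.mul_left (dvd_pow_self p hd.ne') b)

lemma nat_cancel {p a b k l : ℕ} (hp : p.Prime)
    (h : a * p ^ k = b * p ^ l) (ha : ¬ p ∣ a) (hb : ¬ p ∣ b) : a = b := by
  rcases le_total k l with hkl | hkl
  · exact nat_cancel_aux hp hkl h ha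
  · exact (nat_cancel_aux hp hkl h.symm hb).symm

lemma mem_iff_pow_card (C : Subgroup G) {x : G} (hx : x ∈ C) :
    x ^ (Nat.card C) = 1 := by
  have h1 : (⟨x, hx⟩ : C) ^ (Nat.card C) = 1 := pow_card_eq_one'
  have h2 := congrArg (Subtype.val) h1
  push_cast at h2
  exact h2

/-- In a finite cyclic group, subgroups with equal cardinality are equal. -/
lemma subgroup_eq_of_card_eq [Finite G] [IsCyclic G] {A B : Subgroup G}
    (h : Nat.card A = Nat.card B) : A = B := by
  classical
  cases nonempty_fintype G
  have key : ∀ (C : Subgroup G) (x : G), x ∈ C ↔ x ^ (Nat.card C) = 1 := by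
    intro C x
    constructor
    · exact mem_iff_pow_card C
    · intro hx
      have h0 : 0 < Nat.card C := Nat.card_pos
      have hle := IsCyclic.card_pow_eq_one_le (α := G) h0
      have hsub : (C : Set G).toFinset ⊆ Finset.univ.filter fun a : G => a ^ (Nat.card C) = 1 := by
        intro y hy
        simp only [Set.mem_toFinset, SetLike.mem_coe] at hy
        simp only [Finset.mem_filter, Finset.mem_univ, true_and]
        exact mem_iff_pow_card C hy
      have hcard : (C : Set G).toFinset.card = Nat.card C := by
        simp [Set.toFinset_card, ← Nat.card_eq_fintype_card]
      have heq : (C : Set G).toFinset = Finset.univ.filter fun a : G => a ^ (Nat.card C) = 1 :=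
        Finset.eq_of_subset_of_card_le hsub (by rw [hcard]; exact hle)
      have hx2 : x ∈ Finset.univ.filter fun a : G => a ^ (Nat.card C) = 1 := by
        simp only [Finset.mem_filter, Finset.mem_univ, true_and]
        exact hx
      rw [← heq] at hx2
      simpa using hx2
  ext x
  rw [key A x, key B x, h]






lemma normalizer_le_centralizer [Finite G] {p : ℕ} [Fact p.Prime]
    (hmin : ∀ q : ℕ, q.Prime → q ∣ Nat.card G → p ≤ q)
    (P : Sylow p G) (hcyc : IsCyclic P) (hp : p ∣ Nat.card G) :
    Subgroup.normalizer (P : Set G) ≤ Subgroup.centralizer (P : Set G) := by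
  have hG0 : Nat.card G ≠ 0 := Nat.card_pos.ne'
  set m : ℕ := (Nat.card G).factorization p with hm
  have hm1 : 0 < m := (Fact.out : p.Prime).factorization_pos_of_dvd hG0 hp
  have hcardP : Nat.card P = p ^ m := P.card_eq_multiplicity
  -- the conjugation homomorphism
  set ψ := (P : Subgroup G).normalizerMonoidHom with hψ
  haveI : Finite (MulAut ↥(P : Subgroup G)) :=
    Finite.of_injective (MulEquiv.toEquiv (M := ↥(P : Subgroup G)) (N := ↥(P : Subgroup G)))
      fun a b hab => MulEquiv.ext fun x =>
        congrFun (congrArg (fun (e : ↥(P : Subgroup G) ≃ ↥(P : Subgroup G)) => e.toFun) hab) x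
  set c := Nat.card ψ.range with hc
  have hc0 : c ≠ 0 := Nat.card_pos.ne'
  -- c divides the cardinality of MulAut P = totient (p ^ m)
  have hdvd1 : c ∣ p ^ (m - 1) * (p - 1) := by
    have h1 : c ∣ Nat.card (MulAut ↥(P : Subgroup G)) := ψ.range.card_subgroup_dvd_card
    have h2 : Nat.card (MulAut ↥(P : Subgroup G)) = Nat.totient (p ^ m) := by
      have := @IsCyclic.card_mulAut ↥(P : Subgroup G) _ _ hcyc
      rwa [hcardP] at this
    rw [h2, Nat.totient_prime_pow (Fact.out : p.Prime) hm1] at h1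
    exact h1
  -- p does not divide c
  have hPcomm : IsMulCommutative ↥(P : Subgroup G) := by
    haveI := hcyc
    letI : CommGroup ↥(P : Subgroup G) := IsCyclic.commGroup
    exact ⟨⟨mul_comm⟩⟩
  have hPker : ((P : Subgroup G).subgroupOf (Subgroup.normalizer (P : Set G))) ≤ ψ.ker := by
    rw [hψ, Subgroup.normalizerMonoidHom_ker]
    intro x hx
    rw [Subgroup.mem_subgroupOf] at hx ⊢
    exact Subgroup.le_centralizer (P : Subgroup G) hx
  have hpc : ¬ p ∣ c := by
    intro hpc
    have hkerindex : c = ψ.ker.index := (Subgroup.index_ker ψ).symm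
    have hidx : ψ.ker.index ∣ ((P : Subgroup G).subgroupOf
        (Subgroup.normalizer (P : Set G))).index := Subgroup.index_dvd_of_le hPker
    have := (P.subtype le_normalizer).not_dvd_index
    rw [P.coe_subtype] at this
    exact this (hpc.trans (hkerindex ▸ hidx))
  -- c has no prime factors
  have hc1 : c = 1 := by
    by_contra hne
    have hq : c.minFac.Prime := Nat.minFac_prime hne
    have hqc : c.minFac ∣ c := Nat.minFac_dvd c
    have hqG : c.minFac ∣ Nat.card G := by
      have h1 : c ∣ Nat.card ↥(Subgroup.normalizer (P : Set G)) := by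
        rw [hc, ← Subgroup.index_ker ψ]
        exact Subgroup.index_dvd_card _
      exact (hqc.trans h1).trans (Subgroup.normalizer (P : Set G)).card_subgroup_dvd_card
    have hple : p ≤ c.minFac := hmin c.minFac hq hqG
    have hqne : c.minFac ≠ p := fun h => hpc (h ▸ hqc)
    rcases (Nat.Prime.dvd_mul hq).mp (hqc.trans hdvd1) with h1 | h1
    · exact hqne ((Nat.prime_dvd_prime_iff_eq hq (Fact.out : p.Prime)).mp
        (hq.dvd_of_dvd_pow h1))
    · have hp2 : 2 ≤ p := (Fact.out : p.Prime).two_le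
      have : c.minFac ≤ p - 1 := Nat.le_of_dvd (by omega) h1
      omega
  -- conclude
  have hker : ψ.ker = ⊤ := by
    rw [← Subgroup.index_eq_one, Subgroup.index_ker]
    exact hc1
  rw [hψ, Subgroup.normalizerMonoidHom_ker, Subgroup.subgroupOf_eq_top] at hker
  exact hker





lemma range_comp_subtype (X : Subgroup G) {Q : Type u} [Group Q] (f : G →* Q) :
    (f.comp X.subtype).range = Subgroup.map f X := by
  ext x
  simp only [MonoidHom.mem_range, MonoidHom.comp_apply, Subgroup.mem_map, Subgroup.coe_subtype]
  constructor
  · rintro ⟨y, rfl⟩; exact ⟨y, y.2, rfl⟩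
  · rintro ⟨y, hy, rfl⟩; exact ⟨⟨y, hy⟩, rfl⟩

lemma card_subgroupOf' {H M : Subgroup G} (h : H ≤ M) :
    Nat.card (H.subgroupOf M) = Nat.card H :=
  Nat.card_congr (Subgroup.subgroupOfEquivOfLe h).toEquiv

lemma card_map_mk' [Finite G] (D X : Subgroup G) [D.Normal] (h : D ≤ X) :
    Nat.card (Subgroup.map (QuotientGroup.mk' D) X) * Nat.card D = Nat.card X := by
  set f := (QuotientGroup.mk' D).comp X.subtype with hf
  have hker : f.ker = D.subgroupOf X := by
    rw [hf, ← MonoidHom.comap_ker, QuotientGroup.ker_mk']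
    rfl
  have hrange : f.range = Subgroup.map (QuotientGroup.mk' D) X := range_comp_subtype X _
  have h1 : Nat.card X = Nat.card (X ⧸ f.ker) * Nat.card f.ker :=
    Subgroup.card_eq_card_quotient_mul_card_subgroup f.ker
  have h2 : Nat.card (X ⧸ f.ker) = Nat.card f.range :=
    Nat.card_congr (QuotientGroup.quotientKerEquivRange f).toEquiv
  have h3 : Nat.card f.ker = Nat.card D := by rw [hker]; exact card_subgroupOf' h
  rw [h1, h2, h3, hrange]

lemma card_inf_mul_relindex (X N : Subgroup G) :
    Nat.card (X ⊓ N : Subgroup G) * (N.relIndex X) = Nat.card X := by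
  have h1 : Nat.card (N.subgroupOf X) = Nat.card (X ⊓ N : Subgroup G) := by
    rw [inf_comm]
    have := Subgroup.subgroupOf_map_subtype N X
    rw [← this]
    exact (Nat.card_congr ((N.subgroupOf X).equivMapOfInjective X.subtype
      X.subtype_injective).toEquiv)
  rw [← h1]
  exact Subgroup.card_mul_index (N.subgroupOf X)


lemma le_normalizer_inf (X N : Subgroup G) [N.Normal] : X ≤ Subgroup.normalizer ((X ⊓ N : Subgroup G) : Set G) := by
  intro h hh
  rw [Subgroup.mem_normalizer_iff]
  intro x
  simp only [Subgroup.mem_inf]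
  constructor
  · rintro ⟨hx1, hx2⟩
    exact ⟨X.mul_mem (X.mul_mem hh hx1) (X.inv_mem hh), Subgroup.Normal.conj_mem ‹_› x hx2 h⟩
  · rintro ⟨hx1, hx2⟩
    have e : x = h⁻¹ * (h * x * h⁻¹) * h := by group
    constructor
    · rw [e]; exact X.mul_mem (X.mul_mem (X.inv_mem hh) hx1) hh
    · have h2 := Subgroup.Normal.conj_mem ‹N.Normal› _ hx2 h⁻¹
      have e2 : h⁻¹ * (h * x * h⁻¹) * h⁻¹⁻¹ = x := by group
      rwa [e2] at h2

theorem key (n : ℕ) : ∀ (G : Type u) [Group G] [Finite G] [IsZGroup G], Nat.card G = n →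
    ∀ H K : Subgroup G, Nat.card H = Nat.card K →
    ∃ g : G, Subgroup.map (MulAut.conj g).toMonoidHom H = K := by
  induction n using Nat.strong_induction_on with
  | _ n ih =>
  intro G _ _ _ hn H K hHK
  subst hn
  rcases subsingleton_or_nontrivial G with hG | hG
  · refine ⟨1, ?_⟩
    rw [conj_one]
    ext x
    have hx1 : x = 1 := Subsingleton.elim x 1
    subst hx1
    exact iff_of_true H.one_mem K.one_mem
  -- setup
  have hG1 : Nat.card G ≠ 1 := by
    have := Finite.one_lt_card_iff_nontrivial.mpr hG
    omega
  haveI hfp : Fact (Nat.card G).minFac.Prime := ⟨Nat.minFac_prime hG1⟩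
  set p := (Nat.card G).minFac with hpdef
  have hp : p ∣ Nat.card G := Nat.minFac_dvd _
  obtain ⟨P⟩ : Nonempty (Sylow p G) := inferInstance
  have hcyc : IsCyclic P := IsZGroup.isZGroup p hfp.out P
  have hmin : ∀ q, q.Prime → q ∣ Nat.card G → p ≤ q := fun q hq hdq =>
    Nat.minFac_le_of_dvd hq.two_le hdq
  have hL1 := normalizer_le_centralizer hmin P hcyc hp
  set N := (MonoidHom.transferSylow P hL1).ker with hNdef
  have hcompl : IsComplement' N (P : Subgroup G) :=
    MonoidHom.ker_transferSylow_isComplement' P hL1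
  set m : ℕ := (Nat.card G).factorization p with hmdef
  have hm1 : 0 < m := hfp.out.factorization_pos_of_dvd Nat.card_pos.ne' hp
  have hNidx : N.index = p ^ m := by
    rw [hcompl.symm.index_eq_card, P.card_eq_multiplicity]
  have hpN : ¬ p ∣ Nat.card N := MonoidHom.not_dvd_card_ker_transferSylow P hL1
  have hNlt : Nat.card N < Nat.card G := by
    have h1 := N.card_mul_index
    have h2 : 1 < N.index := by
      rw [hNidx]
      exact Nat.one_lt_pow hm1.ne' hfp.out.one_lt
    calc Nat.card N < Nat.card N * N.index := by
          have := Nat.card_pos (α := N); nlinarith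
      _ = Nat.card G := h1
  -- intersections with N
  have hrel : ∀ X : Subgroup G, ∃ k, N.relIndex X = p ^ k := by
    intro X
    obtain ⟨k, _, hk⟩ := (Nat.dvd_prime_pow hfp.out).mp
      (hNidx ▸ Subgroup.relIndex_dvd_index_of_normal N X)
    exact ⟨k, hk⟩
  have hpD : ∀ X : Subgroup G, ¬ p ∣ Nat.card (X ⊓ N : Subgroup G) := fun X h =>
    hpN (h.trans (Subgroup.card_dvd_of_le inf_le_right))
  have hDcard : Nat.card (H ⊓ N : Subgroup G) = Nat.card (K ⊓ N : Subgroup G) := by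
    obtain ⟨k1, e1⟩ := hrel H
    obtain ⟨k2, e2⟩ := hrel K
    have c1 := card_inf_mul_relindex H N
    have c2 := card_inf_mul_relindex K N
    rw [e1] at c1
    rw [e2] at c2
    exact nat_cancel hfp.out (c1.trans (hHK.trans c2.symm)) (hpD H) (hpD K)
  -- conjugate the intersections inside N
  obtain ⟨ν, hν⟩ := ih (Nat.card N) hNlt N rfl ((H ⊓ N).subgroupOf N) ((K ⊓ N).subgroupOf N)
    (by rw [card_subgroupOf' inf_le_right, card_subgroupOf' inf_le_right, hDcard])
  have hconjD : Subgroup.map (MulAut.conj (ν : G)).toMonoidHom (H ⊓ N) = K ⊓ N :=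
    conj_of_subgroupOf inf_le_right inf_le_right ν hν
  set c₁ := (ν : G) with hc₁
  set H₂ := Subgroup.map (MulAut.conj c₁).toMonoidHom H with hH₂def
  have hH₂card : Nat.card H₂ = Nat.card H := card_conj _ _
  have hH₂N : H₂ ⊓ N = K ⊓ N := by
    rw [hH₂def]
    conv_lhs => rw [← conj_normal N c₁]
    rw [← Subgroup.map_inf _ _ _ (conj_injective c₁), hconjD]
  set D := K ⊓ N with hDdef
  have hDK : D ≤ K := inf_le_left
  have hDH₂ : D ≤ H₂ := by
    have h0 : H₂ ⊓ N ≤ H₂ := inf_le_left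
    rwa [hH₂N] at h0
  have hH₂norm : H₂ ≤ Subgroup.normalizer (D : Set G) := by
    have h0 := le_normalizer_inf H₂ N
    rwa [hH₂N] at h0
  have hKnorm : K ≤ Subgroup.normalizer (D : Set G) := le_normalizer_inf K N
  by_cases hDnorm : Subgroup.normalizer (D : Set G) = ⊤
  · -- D is normal in G; pass to the quotient
    haveI hDn : D.Normal := Subgroup.normalizer_eq_top_iff.mp hDnorm
    set π := QuotientGroup.mk' D with hπdef
    set Hb := Subgroup.map π H₂ with hHbdef
    set Kb := Subgroup.map π K with hKbdef
    have e1 : Nat.card Hb * Nat.card D = Nat.card H₂ := card_map_mk' D H₂ hDH₂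
    have e2 : Nat.card Kb * Nat.card D = Nat.card K := card_map_mk' D K hDK
    have hcardHbKb : Nat.card Hb = Nat.card Kb :=
      Nat.eq_of_mul_eq_mul_right Nat.card_pos (by rw [e1, e2, hH₂card, hHK])
    have e3 : Nat.card D * N.relIndex H₂ = Nat.card H₂ := by
      have := card_inf_mul_relindex H₂ N
      rwa [hH₂N] at this
    have hHbrel : Nat.card Hb = N.relIndex H₂ := by
      apply Nat.eq_of_mul_eq_mul_right (Nat.card_pos (α := D))
      rw [e1, ← e3]
      exact mul_comm _ _
    obtain ⟨k, hk⟩ : ∃ k, Nat.card Hb = p ^ k := by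
      obtain ⟨k, _, hk⟩ := (Nat.dvd_prime_pow hfp.out).mp
        (hNidx ▸ Subgroup.relIndex_dvd_index_of_normal N H₂)
      exact ⟨k, hHbrel.trans hk⟩
    have hHbP : IsPGroup p Hb := IsPGroup.of_card hk
    have hKbP : IsPGroup p Kb := IsPGroup.of_card (hcardHbKb ▸ hk)
    obtain ⟨P₁, hP₁⟩ := hHbP.exists_le_sylow
    obtain ⟨P₂, hP₂⟩ := hKbP.exists_le_sylow
    obtain ⟨x, hx⟩ := MulAction.exists_smul_eq (G ⧸ D) P₂ P₁
    have hxsub : Subgroup.map (MulAut.conj x).toMonoidHom (P₂ : Subgroup (G ⧸ D))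
        = (P₁ : Subgroup (G ⧸ D)) := by
      rw [← hx]
      rfl
    have hxKb : Subgroup.map (MulAut.conj x).toMonoidHom Kb ≤ (P₁ : Subgroup (G ⧸ D)) := by
      rw [← hxsub]
      exact Subgroup.map_mono hP₂
    haveI hP₁cyc : IsCyclic P₁ := IsZGroup.isZGroup p hfp.out P₁
    have hsub_eq : Hb.subgroupOf P₁
        = (Subgroup.map (MulAut.conj x).toMonoidHom Kb).subgroupOf P₁ := by
      apply subgroup_eq_of_card_eq
      rw [card_subgroupOf' hP₁, card_subgroupOf' hxKb, card_conj, hcardHbKb]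
    have hHbKb : Hb = Subgroup.map (MulAut.conj x).toMonoidHom Kb := by
      have := congrArg (Subgroup.map (P₁ : Subgroup (G ⧸ D)).subtype) hsub_eq
      rwa [subgroupOf_map_subtype, subgroupOf_map_subtype, inf_of_le_left hP₁,
        inf_of_le_left hxKb] at this
    obtain ⟨g₂, hg₂⟩ := QuotientGroup.mk'_surjective D x
    have hcomm : Subgroup.map π (Subgroup.map (MulAut.conj g₂).toMonoidHom K)
        = Subgroup.map (MulAut.conj x).toMonoidHom Kb := by
      rw [hKbdef, Subgroup.map_map, Subgroup.map_map]
      congr 1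
      ext y
      simp only [MonoidHom.comp_apply, MulEquiv.coe_toMonoidHom, MulAut.conj_apply, map_mul,
        map_inv, ← hg₂]
      rfl
    have hfinal : Subgroup.map π (Subgroup.map (MulAut.conj g₂).toMonoidHom K)
        = Subgroup.map π H₂ := by
      rw [hcomm, ← hHbKb, hHbdef]
    have h5 := congrArg (Subgroup.comap π) hfinal
    rw [Subgroup.comap_map_eq, Subgroup.comap_map_eq] at h5
    have hkerD : π.ker = D := QuotientGroup.ker_mk' D
    rw [hkerD] at h5
    have hDg₂K : D ≤ Subgroup.map (MulAut.conj g₂).toMonoidHom K := by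
      conv_lhs => rw [← conj_normal D g₂]
      exact Subgroup.map_mono hDK
    rw [sup_of_le_left hDg₂K, sup_of_le_left hDH₂] at h5
    refine ⟨g₂⁻¹ * c₁, ?_⟩
    rw [← conj_conj, ← hH₂def, ← h5, conj_conj, inv_mul_cancel, conj_one]
  · -- the normalizer of D is a proper subgroup
    set M := Subgroup.normalizer (D : Set G) with hMdef
    have hMlt : Nat.card M < Nat.card G := by
      refine Nat.lt_of_le_of_ne (Nat.le_of_dvd Nat.card_pos M.card_subgroup_dvd_card) ?_
      intro h
      exact hDnorm (Subgroup.eq_top_of_card_eq M h)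
    obtain ⟨μ, hμ⟩ := ih (Nat.card M) hMlt M rfl (H₂.subgroupOf M) (K.subgroupOf M)
      (by rw [card_subgroupOf' hH₂norm, card_subgroupOf' hKnorm, hH₂card, hHK])
    have hfin := conj_of_subgroupOf hH₂norm hKnorm μ hμ
    exact ⟨(μ : G) * c₁, by rw [← conj_conj, ← hH₂def, hfin]⟩

end ZMhelp

/-- In a finite group all of whose Sylow subgroups are cyclic, two subgroups are
conjugate if and only if they have the same order. -/
theorem conj_iff_card_eq_of_sylow_cyclic {G : Type*} [Group G] [Finite G]
    (hsyl : ∀ p : ℕ, p.Prime → ∀ P : Sylow p G, IsCyclic P)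
    (H K : Subgroup G) :
    (∃ g : G, Subgroup.map (MulAut.conj g).toMonoidHom H = K) ↔
      Nat.card H = Nat.card K := by
  constructor
  · rintro ⟨g, rfl⟩
    exact (ZMhelp.card_conj g H).symm
  · intro h
    haveI : IsZGroup G := ⟨hsyl⟩
    exact ZMhelp.key (Nat.card G) G rfl H K h
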